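/- Let A be a real m×n matrix, b ∈ ℝ^m, and assume V = {v ∈ ℝ^n : A v ≥ b} is nonempty and bounded. Let (x^i, c^i), i = 1,…,N, be data with x^i ∈ ℝ^K and c^i ∈ ℝ^n. Then the infimum over ω ∈ ℝ^{n×K} of the pessimistic value Λ(ω) = sup{(1/N) Σ_{i=1}^N c^i · v^i : v^i ∈ V*(ω x^i) for each i} equals the infimum of Σ_{i=1}^N (b · μ^i + (ω x^i) · δ^i) over all ω ∈ ℝ^{n×K} and (μ^i, δ^i, γ^i)_{i=1}^N with μ^i ∈ ℝ^m, δ^i ∈ ℝ^n, γ^i ∈ ℝ satisfying A^T μ^i + γ^i (ω x^i) = (1/N) c^i, A δ^i − γ^i b ≥ 0, μ^i ≤ 0 and γ^i ≥ 0 for all i. -/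

import Mathlib

open Matrix Set BigOperators

noncomputable section

/-- The polyhedron `V = {v : A v ≥ b}` (inequalities entrywise). -/
def polyV {m n : ℕ} (A : Matrix (Fin m) (Fin n) ℝ) (b : Fin m → ℝ) : Set (Fin n → ℝ) :=
  {v | b ≤ A.mulVec v}

/-- `z*(c)`: the optimal (infimum) value of `c · v` over `V`. -/
noncomputable def zstar {m n : ℕ} (A : Matrix (Fin m) (Fin n) ℝ) (b : Fin m → ℝ)
    (c : Fin n → ℝ) : ℝ :=
  sInf ((fun v => c ⬝ᵥ v) '' polyV A b)

/-- `V*(c)`: the set of optimal solutions of `min {c · v : v ∈ V}`. -/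
def Vstar {m n : ℕ} (A : Matrix (Fin m) (Fin n) ℝ) (b : Fin m → ℝ)
    (c : Fin n → ℝ) : Set (Fin n → ℝ) :=
  {v ∈ polyV A b | c ⬝ᵥ v = zstar A b c}

/-- The pessimistic value `Λ(ω)` of the linear model `ω`. -/
noncomputable def pessValue {m n N K : ℕ} (A : Matrix (Fin m) (Fin n) ℝ) (b : Fin m → ℝ)
    (x : Fin N → Fin K → ℝ) (c : Fin N → Fin n → ℝ)
    (ω : Matrix (Fin n) (Fin K) ℝ) : ℝ :=
  sSup {r : ℝ | ∃ v : Fin N → Fin n → ℝ,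
    (∀ i, v i ∈ Vstar A b (ω.mulVec (x i))) ∧
    r = (1 / (N : ℝ)) * ∑ i, c i ⬝ᵥ v i}




variable {ι κ : Type} [Fintype ι] [Fintype κ] [DecidableEq ι] [DecidableEq κ]

/-- The cone generated by a finite family of vectors. -/
def myCone (w : ι → (κ → ℝ)) : Set (κ → ℝ) :=
  {x | ∃ l : ι → ℝ, 0 ≤ l ∧ ∑ i, l i • w i = x}

/-- Carathéodory-type support reduction for cones. -/
lemma cone_cara (w : ι → (κ → ℝ)) (s : Finset ι) (l : ι → ℝ) (hl : 0 ≤ l)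
    (hsupp : ∀ i ∉ s, l i = 0) :
    ∃ (t : Finset ι) (l' : ι → ℝ), 0 ≤ l' ∧ (∀ i ∉ t, l' i = 0) ∧
      LinearIndependent ℝ (fun i : t => w i) ∧ ∑ i, l' i • w i = ∑ i, l i • w i := by
  induction s using Finset.strongInduction generalizing l with
  | _ s ih =>
  by_cases hind : LinearIndependent ℝ (fun i : s => w i)
  · exact ⟨s, l, hl, hsupp, hind, rfl⟩
  · -- get a dependence relation supported on s
    rw [Fintype.not_linearIndependent_iff] at hind
    obtain ⟨g, hg0, j0, hj0⟩ := hind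
    -- extend g to ι
    classical
    set G : ι → ℝ := fun i => if h : i ∈ s then g ⟨i, h⟩ else 0 with hG
    have hGsum : ∑ i, G i • w i = 0 := by
      rw [← Finset.sum_subset (Finset.subset_univ s)]
      · rw [← Finset.sum_attach s (fun i => G i • w i)]
        have : ∀ i : s, G i • w i = g i • w i := by
          intro i; simp [hG, i.2]
        rw [Finset.sum_congr rfl (fun i _ => this i)]
        exact hg0
      · intro i _ hi; simp [hG, hi]
    have hGne : ∃ i ∈ s, G i ≠ 0 := ⟨j0, j0.2, by simpa [hG, j0.2] using hj0⟩
    -- wlog some positive coefficient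
    have key : ∀ G : ι → ℝ, (∑ i, G i • w i = 0) → (∃ i ∈ s, 0 < G i) →
        (∀ i ∉ s, G i = 0) →
        ∃ (t : Finset ι) (l' : ι → ℝ), 0 ≤ l' ∧ (∀ i ∉ t, l' i = 0) ∧
          LinearIndependent ℝ (fun i : t => w i) ∧ ∑ i, l' i • w i = ∑ i, l i • w i := by
      intro G hGsum hGpos hGsupp
      set T : Finset ι := s.filter (fun i => 0 < G i) with hT
      have hTne : T.Nonempty := by
        obtain ⟨i, hi, hpos⟩ := hGpos
        exact ⟨i, by simp [hT, hi, hpos]⟩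
      obtain ⟨i0, hi0T, hi0min⟩ := T.exists_min_image (fun i => l i / G i) hTne
      have hi0s : i0 ∈ s := (Finset.mem_filter.mp hi0T).1
      have hGi0 : 0 < G i0 := (Finset.mem_filter.mp hi0T).2
      set r := l i0 / G i0 with hr
      have hr0 : 0 ≤ r := div_nonneg (hl i0) hGi0.le
      set l' : ι → ℝ := fun i => l i - r * G i with hl'
      have hl'0 : 0 ≤ l' := by
        intro i
        by_cases hiT : i ∈ T
        · have hGi : 0 < G i := (Finset.mem_filter.mp hiT).2
          have := hi0min i hiT
          simp only [hl', Pi.zero_apply]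
          rw [sub_nonneg]
          calc r * G i ≤ (l i / G i) * G i :=
                mul_le_mul_of_nonneg_right this hGi.le
            _ = l i := div_mul_cancel₀ _ hGi.ne'
        · by_cases his : i ∈ s
          · have hGi : G i ≤ 0 := by
              by_contra h
              exact hiT (Finset.mem_filter.mpr ⟨his, lt_of_not_ge h⟩)
            simp only [hl', Pi.zero_apply, sub_nonneg]
            calc r * G i ≤ 0 := mul_nonpos_of_nonneg_of_nonpos hr0 hGi
              _ ≤ l i := hl i
          · simp [hl', hsupp i his, hGsupp i his]
      have hl'supp : ∀ i ∉ s.erase i0, l' i = 0 := by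
        intro i hi
        rw [Finset.mem_erase] at hi
        push_neg at hi
        by_cases his : i ∈ s
        · have : i = i0 := by by_contra h; exact (hi h) his
          subst this
          simp only [hl', hr]
          field_simp
          ring
        · simp [hl', hsupp i his, hGsupp i his]
      have hsum' : ∑ i, l' i • w i = ∑ i, l i • w i := by
        simp only [hl', sub_smul, ← smul_smul, Finset.sum_sub_distrib, ← Finset.smul_sum, hGsum,
          smul_zero, sub_zero]
      obtain ⟨t, l'', h1, h2, h3, h4⟩ :=
        ih (s.erase i0) (Finset.erase_ssubset hi0s) l' hl'0 hl'supp
      exact ⟨t, l'', h1, h2, h3, h4.trans hsum'⟩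
    by_cases hpos : ∃ i ∈ s, 0 < G i
    · exact key G hGsum hpos (fun i hi => by simp [hG, hi])
    · refine key (-G) (by simpa using hGsum) ?_ (fun i hi => by simp [hG, hi])
      obtain ⟨i, his, hne⟩ := hGne
      push_neg at hpos
      exact ⟨i, his, by simpa using lt_of_le_of_ne (hpos i his) hne⟩

set_option linter.unusedSectionVars false

/-- The linear map sending coefficients to the combination. -/
def combMap (w : ι → (κ → ℝ)) : (ι → ℝ) →ₗ[ℝ] (κ → ℝ) where
  toFun l := ∑ i, l i • w i
  map_add' a b := by simp [add_smul, Finset.sum_add_distrib]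
  map_smul' r a := by simp [← smul_smul, Finset.smul_sum]

lemma myCone_isClosed (w : ι → (κ → ℝ)) : IsClosed (myCone w) := by
  classical
  have hrepr : myCone w = ⋃ (t : Finset ι) (_ : LinearIndependent ℝ (fun i : t => w i)),
      ⇑(combMap (fun i : {i // i ∈ t} => w i)) '' {l | 0 ≤ l} := by
    ext y
    constructor
    · rintro ⟨l, hl, rfl⟩
      obtain ⟨t, l', h1, h2, h3, h4⟩ := cone_cara w Finset.univ l hl (by simp)
      refine Set.mem_iUnion.mpr ⟨t, Set.mem_iUnion.mpr ⟨h3, ⟨fun i => l' i, fun i => h1 _, ?_⟩⟩⟩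
      show ∑ i : {i // i ∈ t}, l' i • w i = _
      rw [← h4, Finset.univ_eq_attach, Finset.sum_attach t (fun i => l' i • w i)]
      exact Finset.sum_subset (Finset.subset_univ t) (fun i _ hi => by simp [h2 i hi])
    · simp only [Set.mem_iUnion]
      rintro ⟨t, hind, l, hl, rfl⟩
      show _ ∈ myCone w
      refine ⟨fun i => if h : i ∈ t then l ⟨i, h⟩ else 0, fun i => ?_, ?_⟩
      · by_cases h : i ∈ t <;> simp [h] <;> exact hl _
      · show (∑ i : ι, (if h : i ∈ t then l ⟨i, h⟩ else 0) • w i)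
            = ∑ i : {i // i ∈ t}, l i • w i
        rw [← Finset.sum_subset (Finset.subset_univ t)
            (f := fun i => (if h : i ∈ t then l ⟨i, h⟩ else 0) • w i)
            (fun i _ hi => by simp [hi]),
          ← Finset.sum_attach t (fun i => (if h : i ∈ t then l ⟨i, h⟩ else 0) • w i),
          Finset.univ_eq_attach]
        exact Finset.sum_congr rfl (fun i _ => by simp [i.2])
  rw [hrepr]
  refine isClosed_iUnion_of_finite (fun t => isClosed_iUnion_of_finite (fun hind => ?_))
  have hinj : LinearMap.ker (combMap (fun i : {i // i ∈ t} => w i)) = ⊥ := by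
    rw [LinearMap.ker_eq_bot']
    intro l hl
    have := Fintype.linearIndependent_iff.mp hind l hl
    funext i; exact this i
  have hemb := LinearMap.isClosedEmbedding_of_injective hinj
  have hclosed : IsClosed {l : {i // i ∈ t} → ℝ | 0 ≤ l} := by
    have : {l : {i // i ∈ t} → ℝ | 0 ≤ l} = ⋂ i, {l | 0 ≤ l i} := by
      ext l; simp [Pi.le_def]
    rw [this]
    exact isClosed_iInter (fun i => isClosed_le continuous_const (continuous_apply i))
  exact hemb.isClosedMap _ hclosed

lemma myCone_convex (w : ι → (κ → ℝ)) : Convex ℝ (myCone w) := by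
  rintro x ⟨lx, hlx, rfl⟩ y ⟨ly, hly, rfl⟩ a b ha hb _
  refine ⟨a • lx + b • ly, ?_, ?_⟩
  · intro i
    simp only [Pi.add_apply, Pi.smul_apply, smul_eq_mul, Pi.zero_apply]
    exact add_nonneg (mul_nonneg ha (hlx i)) (mul_nonneg hb (hly i))
  · simp [add_smul, Finset.sum_add_distrib, Finset.smul_sum, smul_smul]

/-- Representation of a continuous linear functional on a finite pi type via dot product. -/
lemma clm_repr (f : (κ → ℝ) →L[ℝ] ℝ) (z : κ → ℝ) :
    f z = z ⬝ᵥ (fun j => f (Pi.single j 1)) := by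
  have hz : z = ∑ j, z j • (Pi.single j 1 : κ → ℝ) := by
    funext k
    simp [Finset.sum_apply, Pi.single_apply]
  conv_lhs => rw [hz]
  rw [map_sum]
  simp [dotProduct, Finset.sum_apply]

/-- Farkas' lemma. -/
lemma farkas (w : ι → (κ → ℝ)) (d : κ → ℝ)
    (h : ∀ z : κ → ℝ, (∀ i, 0 ≤ w i ⬝ᵥ z) → 0 ≤ d ⬝ᵥ z) :
    ∃ l : ι → ℝ, 0 ≤ l ∧ ∑ i, l i • w i = d := by
  by_contra hd
  have hd' : d ∉ myCone w := fun ⟨l, h1, h2⟩ => hd ⟨l, h1, h2⟩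
  obtain ⟨f, u, hfC, hfd⟩ :=
    geometric_hahn_banach_closed_point (myCone_convex w) (myCone_isClosed w) hd'
  -- f < u on the cone, u < f d
  have h0C : (0 : κ → ℝ) ∈ myCone w := ⟨0, le_refl _, by simp⟩
  have hu0 : 0 < u := by simpa using hfC 0 h0C
  have hfC0 : ∀ x ∈ myCone w, f x ≤ 0 := by
    intro x hx
    by_contra hpos
    push_neg at hpos
    obtain ⟨l, hl, rfl⟩ := hx
    have hmem : ∀ t : ℝ, 0 ≤ t → t • (∑ i, l i • w i) ∈ myCone w := by
      intro t ht
      exact ⟨t • l, fun i => mul_nonneg ht (hl i), by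
        simp [Finset.smul_sum, smul_smul]⟩
    have := hfC _ (hmem ((u + 1) / f (∑ i, l i • w i)) (by positivity))
    rw [f.map_smul] at this
    simp only [smul_eq_mul] at this
    rw [div_mul_cancel₀ _ (ne_of_gt hpos)] at this
    linarith
  -- each generator gives a row inequality
  set y : κ → ℝ := fun j => f (Pi.single j 1) with hy
  have hrows : ∀ i, 0 ≤ w i ⬝ᵥ (-y) := by
    intro i
    have : f (w i) ≤ 0 := hfC0 _ ⟨Pi.single i 1, by
      intro k; by_cases h : k = i <;> simp [Pi.single_apply, h], by
      simp [Pi.single_apply, ite_smul]⟩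
    rw [clm_repr f (w i)] at this
    simpa [dotProduct] using neg_nonneg.mpr this
  have := h (-y) hrows
  rw [show d ⬝ᵥ (-y) = -(f d) by rw [clm_repr f d]; simp [dotProduct, hy]] at this
  linarith

/-- LP strong duality in the form we need. -/
lemma strong_duality (M : Matrix ι κ ℝ) (q : ι → ℝ) (d : κ → ℝ) (S : ℝ)
    (hne : ∃ v, M.mulVec v ≤ q) (hub : ∀ v, M.mulVec v ≤ q → d ⬝ᵥ v ≤ S) :
    ∃ y : ι → ℝ, 0 ≤ y ∧ (∀ j, ∑ i, y i * M i j = d j) ∧ q ⬝ᵥ y ≤ S := by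
  classical
  -- homogenized system on `κ ⊕ Unit`
  set w : ι ⊕ Unit → (κ ⊕ Unit → ℝ) := fun a =>
    Sum.elim (fun i => Sum.elim (fun j => -M i j) (fun _ => q i))
      (fun _ => Sum.elim 0 (fun _ => 1)) a with hw
  set D : κ ⊕ Unit → ℝ := Sum.elim (fun j => -d j) (fun _ => S) with hD
  have key : ∀ z : κ ⊕ Unit → ℝ, (∀ a, 0 ≤ w a ⬝ᵥ z) → 0 ≤ D ⬝ᵥ z := by
    intro z hz
    set v : κ → ℝ := fun j => z (Sum.inl j) with hv
    set t : ℝ := z (Sum.inr ()) with ht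
    have hdot : ∀ (u : κ → ℝ) (r : ℝ),
        (Sum.elim u (fun _ => r) : κ ⊕ Unit → ℝ) ⬝ᵥ z = u ⬝ᵥ v + r * t := by
      intro u r
      simp [dotProduct, Fintype.sum_sum_type, hv, ht]
    have ht0 : 0 ≤ t := by
      have := hz (Sum.inr ())
      simpa [hw, dotProduct, Fintype.sum_sum_type, ht] using this
    have hrow : ∀ i, (M.mulVec v) i ≤ t * q i := by
      intro i
      have h0 := hz (Sum.inl i)
      rw [hw] at h0
      simp only [Sum.elim_inl] at h0
      rw [hdot] at h0
      have hsn : (fun j => -M i j) ⬝ᵥ v = -(M i ⬝ᵥ v) := by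
        simp [dotProduct, neg_mul, Finset.sum_neg_distrib]
      rw [hsn] at h0
      have hmv : (M.mulVec v) i = M i ⬝ᵥ v := rfl
      rw [hmv]; linarith
    rw [hD, hdot]
    rcases eq_or_lt_of_le ht0 with hteq | htpos
    · -- t = 0 : recession direction
      obtain ⟨v0, hv0⟩ := hne
      have hMv : M.mulVec v ≤ 0 := by
        intro i; have := hrow i; rw [← hteq] at this; simpa using this
      have hbound : ∀ k : ℝ, 0 ≤ k → d ⬝ᵥ v0 + k * (d ⬝ᵥ v) ≤ S := by
        intro k hk
        have : M.mulVec (v0 + k • v) ≤ q := by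
          intro i
          have h1 : (M.mulVec (v0 + k • v)) i
              = (M.mulVec v0) i + k * (M.mulVec v) i := by
            simp [Matrix.mulVec_add, Matrix.mulVec_smul]
          rw [h1]
          have := mul_nonpos_of_nonneg_of_nonpos hk (hMv i)
          linarith [hv0 i]
        have := hub _ this
        simpa [dotProduct_add, dotProduct_smul, add_dotProduct,
          smul_dotProduct, smul_eq_mul, mul_comm] using this
      by_contra hneg
      push_neg at hneg
      rw [← hteq] at hneg
      simp only [mul_zero, add_zero] at hneg
      -- hneg : -d ⬝ᵥ v + S * 0 < 0, so d ⬝ᵥ v > 0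
      have hdv : 0 < d ⬝ᵥ v := by
        have : (fun j => -d j) ⬝ᵥ v = -(d ⬝ᵥ v) := by
          simp [dotProduct]
        linarith [hneg, this.symm.le]
      set k : ℝ := max ((S - d ⬝ᵥ v0) / (d ⬝ᵥ v)) 0 + 1 with hk
      have hk0 : 0 ≤ k := by positivity
      have h1 := hbound k hk0
      have h2 : (S - d ⬝ᵥ v0) / (d ⬝ᵥ v) < k := by
        rw [hk]; linarith [le_max_left ((S - d ⬝ᵥ v0) / (d ⬝ᵥ v)) 0]
      have h3 : S - d ⬝ᵥ v0 < k * (d ⬝ᵥ v) := by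
        rw [div_lt_iff₀ hdv] at h2; linarith
      linarith
    · -- t > 0 : scale
      have : M.mulVec (t⁻¹ • v) ≤ q := by
        intro i
        rw [Matrix.mulVec_smul]
        have := hrow i
        calc (t⁻¹ • M.mulVec v) i = t⁻¹ * (M.mulVec v) i := rfl
          _ ≤ t⁻¹ * (t * q i) := by
              exact mul_le_mul_of_nonneg_left this (inv_nonneg.mpr ht0)
          _ = q i := by field_simp
      have := hub _ this
      rw [dotProduct_smul] at this
      have h2 : d ⬝ᵥ v ≤ t * S := by
        have := mul_le_mul_of_nonneg_left this htpos.le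
        rw [smul_eq_mul, ← mul_assoc, mul_inv_cancel₀ (ne_of_gt htpos), one_mul] at this
        exact this
      have : (fun j => -d j) ⬝ᵥ v = -(d ⬝ᵥ v) := by simp [dotProduct]
      linarith [this.symm.le]
  obtain ⟨l, hl, hsum⟩ := farkas w D key
  refine ⟨fun i => l (Sum.inl i), fun i => hl _, ?_, ?_⟩
  · intro j
    have := congrFun hsum (Sum.inl j)
    rw [Finset.sum_apply] at this
    rw [Fintype.sum_sum_type] at this
    simp only [hw, Sum.elim_inl, Sum.elim_inr, Pi.smul_apply, smul_eq_mul, hD] at this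
    -- ∑ i, l (inl i) * (-M i j) + ∑ u, l (inr u) * 0 = -d j
    simp only [Pi.zero_apply, mul_zero, Finset.sum_const_zero, add_zero, mul_neg] at this
    have hsn : ∑ x : ι, -(l (Sum.inl x) * M x j)
        = -(∑ x : ι, l (Sum.inl x) * M x j) := by
      rw [Finset.sum_neg_distrib]
    rw [hsn] at this
    linarith
  · have := congrFun hsum (Sum.inr ())
    rw [Finset.sum_apply, Fintype.sum_sum_type] at this
    simp only [hw, Sum.elim_inl, Sum.elim_inr, Pi.smul_apply, smul_eq_mul, hD] at this
    simp only [mul_one, Finset.univ_unique, Finset.sum_singleton] at this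
    have hnn : 0 ≤ l (Sum.inr ()) := hl _
    have : q ⬝ᵥ (fun i => l (Sum.inl i)) = ∑ i, l (Sum.inl i) * q i := by
      simp [dotProduct, mul_comm]
    rw [this]
    linarith [hnn]

noncomputable section

variable {m n : ℕ} {A : Matrix (Fin m) (Fin n) ℝ} {b : Fin m → ℝ}

lemma dot_continuous (c : Fin n → ℝ) : Continuous (fun v : Fin n → ℝ => c ⬝ᵥ v) := by
  simp only [dotProduct]
  exact continuous_finset_sum _ (fun j _ => (continuous_const.mul (continuous_apply j)))

lemma polyV_isClosed : IsClosed (polyV A b) := by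
  have : polyV A b = ⋂ i, {v | b i ≤ (A.mulVec v) i} := by
    ext v; simp [polyV, Pi.le_def]
  rw [this]
  refine isClosed_iInter (fun i => isClosed_le continuous_const ?_)
  exact (dot_continuous (A i))

lemma polyV_isCompact (hbd : Bornology.IsBounded (polyV A b)) : IsCompact (polyV A b) :=
  Metric.isCompact_of_isClosed_isBounded polyV_isClosed hbd

lemma zstar_le (hbd : Bornology.IsBounded (polyV A b)) {c : Fin n → ℝ} {v : Fin n → ℝ}
    (hv : v ∈ polyV A b) : zstar A b c ≤ c ⬝ᵥ v :=
  csInf_le (((polyV_isCompact hbd).image (dot_continuous c)).bddBelow) ⟨v, hv, rfl⟩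

lemma zstar_attained (hne : (polyV A b).Nonempty) (hbd : Bornology.IsBounded (polyV A b))
    (c : Fin n → ℝ) : ∃ v ∈ polyV A b, c ⬝ᵥ v = zstar A b c := by
  have h := ((polyV_isCompact hbd).image (dot_continuous c)).sInf_mem (hne.image _)
  obtain ⟨v, hv, hv2⟩ := h
  exact ⟨v, hv, hv2⟩

lemma Vstar_nonempty (hne : (polyV A b).Nonempty) (hbd : Bornology.IsBounded (polyV A b))
    (c : Fin n → ℝ) : (Vstar A b c).Nonempty := by
  obtain ⟨v, hv, hv2⟩ := zstar_attained hne hbd c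
  exact ⟨v, hv, hv2⟩

lemma Vstar_isCompact (hbd : Bornology.IsBounded (polyV A b)) (c : Fin n → ℝ) :
    IsCompact (Vstar A b c) := by
  have : Vstar A b c = polyV A b ∩ {v | c ⬝ᵥ v = zstar A b c} := rfl
  rw [this]
  exact (polyV_isCompact hbd).inter_right (isClosed_eq (dot_continuous c) continuous_const)

/-- The recession cone of a bounded nonempty polyhedron is trivial. -/
lemma recession_zero (hne : (polyV A b).Nonempty) (hbd : Bornology.IsBounded (polyV A b))
    {δ : Fin n → ℝ} (hδ : 0 ≤ A.mulVec δ) : δ = 0 := by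
  by_contra hδ0
  obtain ⟨v0, hv0⟩ := hne
  obtain ⟨R, hR⟩ := (isBounded_iff_forall_norm_le).mp hbd
  have hmem : ∀ k : ℝ, 0 ≤ k → v0 + k • δ ∈ polyV A b := by
    intro k hk i
    have : (A.mulVec (v0 + k • δ)) i = (A.mulVec v0) i + k * (A.mulVec δ) i := by
      simp [Matrix.mulVec_add, Matrix.mulVec_smul]
    rw [this]
    have := mul_nonneg hk (hδ i)
    linarith [hv0 i]
  have hδn : 0 < ‖δ‖ := norm_pos_iff.mpr hδ0
  set k : ℝ := (R + ‖v0‖ + 1) / ‖δ‖ with hk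
  have hRpos : 0 ≤ R := le_trans (norm_nonneg v0) (hR v0 hv0)
  have hk0 : 0 ≤ k := by positivity
  have h1 := hR _ (hmem k hk0)
  have h2 : ‖k • δ‖ ≤ ‖v0 + k • δ‖ + ‖v0‖ := by
    have := norm_sub_le (v0 + k • δ) v0
    simpa using this
  rw [norm_smul, Real.norm_eq_abs, abs_of_nonneg hk0, hk,
    div_mul_cancel₀ _ (ne_of_gt hδn)] at h2
  linarith

end

noncomputable section
variable {m n : ℕ} {A : Matrix (Fin m) (Fin n) ℝ} {b : Fin m → ℝ}

/-- Optimal value of the inner (pessimistic) problem over `Vstar`. -/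
noncomputable def Ssup (A : Matrix (Fin m) (Fin n) ℝ) (b : Fin m → ℝ)
    (chat d : Fin n → ℝ) : ℝ :=
  sSup ((fun v => d ⬝ᵥ v) '' Vstar A b chat)

lemma Ssup_attained (hne : (polyV A b).Nonempty) (hbd : Bornology.IsBounded (polyV A b))
    (chat d : Fin n → ℝ) :
    ∃ v ∈ Vstar A b chat, d ⬝ᵥ v = Ssup A b chat d := by
  have h := ((Vstar_isCompact hbd chat).image (dot_continuous d)).sSup_mem
    ((Vstar_nonempty hne hbd chat).image _)
  obtain ⟨v, hv, hv2⟩ := h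
  exact ⟨v, hv, hv2⟩

lemma le_Ssup (hbd : Bornology.IsBounded (polyV A b)) {chat d : Fin n → ℝ} {v : Fin n → ℝ}
    (hv : v ∈ Vstar A b chat) : d ⬝ᵥ v ≤ Ssup A b chat d :=
  le_csSup (((Vstar_isCompact hbd chat).image (dot_continuous d)).bddAbove) ⟨v, hv, rfl⟩

/-- Weak duality for the single inner problem. -/
lemma weak_dual_single (hne : (polyV A b).Nonempty) (hbd : Bornology.IsBounded (polyV A b))
    {chat d : Fin n → ℝ} {μ : Fin m → ℝ} {δ : Fin n → ℝ} {γ : ℝ}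
    (heq : Aᵀ.mulVec μ + γ • chat = d) (hδ : γ • b ≤ A.mulVec δ)
    (hμ : μ ≤ 0) (hγ : 0 ≤ γ) :
    Ssup A b chat d ≤ b ⬝ᵥ μ + chat ⬝ᵥ δ := by
  obtain ⟨v, hv, hvS⟩ := Ssup_attained hne hbd chat d
  rw [← hvS, ← heq]
  have h1 : (Aᵀ.mulVec μ + γ • chat) ⬝ᵥ v
      = μ ⬝ᵥ (A.mulVec v) + γ * (chat ⬝ᵥ v) := by
    rw [add_dotProduct, smul_dotProduct, smul_eq_mul,
      Matrix.mulVec_transpose, ← Matrix.dotProduct_mulVec]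
  rw [h1]
  have h2 : μ ⬝ᵥ (A.mulVec v) ≤ b ⬝ᵥ μ := by
    rw [dotProduct_comm b μ]
    refine Finset.sum_le_sum (fun j _ => ?_)
    exact mul_le_mul_of_nonpos_left (hv.1 j) (hμ j)
  have h3 : γ * (chat ⬝ᵥ v) ≤ chat ⬝ᵥ δ := by
    rw [hv.2]
    rcases eq_or_lt_of_le hγ with hγ0 | hγpos
    · have hAδ : 0 ≤ A.mulVec δ := by
        intro i; have := hδ i; rw [← hγ0] at this; simpa using this
      have : δ = 0 := recession_zero hne hbd hAδ
      rw [this, ← hγ0]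
      simp
    · have hmem : γ⁻¹ • δ ∈ polyV A b := by
        intro i
        rw [Matrix.mulVec_smul]
        have := hδ i
        have h4 : γ • b i ≤ (A.mulVec δ) i := this
        calc b i = γ⁻¹ * (γ * b i) := by field_simp
          _ ≤ γ⁻¹ * (A.mulVec δ) i :=
              mul_le_mul_of_nonneg_left h4 (inv_nonneg.mpr hγ)
          _ = (γ⁻¹ • A.mulVec δ) i := rfl
      have := zstar_le hbd hmem (c := chat)
      rw [dotProduct_smul, smul_eq_mul] at this
      calc γ * zstar A b chat ≤ γ * (γ⁻¹ * (chat ⬝ᵥ δ)) :=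
            mul_le_mul_of_nonneg_left this hγ
        _ = chat ⬝ᵥ δ := by field_simp
  linarith

/-- Strong duality for the single inner problem. -/
lemma strong_dual_single (hne : (polyV A b).Nonempty) (hbd : Bornology.IsBounded (polyV A b))
    (chat d : Fin n → ℝ) :
    ∃ (μ : Fin m → ℝ) (δ : Fin n → ℝ) (γ : ℝ),
      Aᵀ.mulVec μ + γ • chat = d ∧ γ • b ≤ A.mulVec δ ∧ μ ≤ 0 ∧ 0 ≤ γ ∧
      b ⬝ᵥ μ + chat ⬝ᵥ δ ≤ Ssup A b chat d := by
  classical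
  obtain ⟨vs, hvs, hvsz⟩ := zstar_attained hne hbd chat
  set M : Matrix (Fin m ⊕ Unit) (Fin n) ℝ :=
    Sum.elim (fun j => fun k => -A j k) (fun _ => chat) with hM
  set q : Fin m ⊕ Unit → ℝ :=
    Sum.elim (fun j => -b j) (fun _ => zstar A b chat) with hq
  have hrowval : ∀ (v : Fin n → ℝ) (a : Fin m ⊕ Unit),
      (M.mulVec v) a = Sum.elim (fun j => -((A.mulVec v) j)) (fun _ => chat ⬝ᵥ v) a := by
    intro v a
    cases a with
    | inl j => simp [hM, Matrix.mulVec, dotProduct, Matrix.mulVec,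
        neg_mul, Finset.sum_neg_distrib]
    | inr u => simp [hM, Matrix.mulVec]
  have hfeas : ∀ v : Fin n → ℝ, M.mulVec v ≤ q ↔ v ∈ Vstar A b chat := by
    intro v
    constructor
    · intro h
      have h1 : v ∈ polyV A b := by
        intro j
        have := h (Sum.inl j)
        rw [hrowval] at this
        simp only [Sum.elim_inl, hq] at this
        linarith
      have h2 := h (Sum.inr ())
      rw [hrowval] at h2
      simp only [Sum.elim_inr, hq] at h2
      exact ⟨h1, le_antisymm h2 (zstar_le hbd h1)⟩
    · intro hv a
      rw [hrowval]
      cases a with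
      | inl j => simp only [Sum.elim_inl, hq]; linarith [hv.1 j]
      | inr u => simp only [Sum.elim_inr, hq]; exact le_of_eq hv.2
  obtain ⟨y, hy0, hyeq, hyval⟩ := strong_duality M q d (Ssup A b chat d)
    ⟨vs, (hfeas vs).mpr ⟨hvs, hvsz⟩⟩
    (fun v hv => le_Ssup hbd ((hfeas v).mp hv))
  set μ : Fin m → ℝ := fun j => -y (Sum.inl j) with hμdef
  set γ : ℝ := y (Sum.inr ()) with hγdef
  set δ : Fin n → ℝ := γ • vs with hδdef
  refine ⟨μ, δ, γ, ?_, ?_, fun j => neg_nonpos.mpr (hy0 _), hy0 _, ?_⟩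
  · funext k
    have := hyeq k
    rw [Fintype.sum_sum_type] at this
    simp only [hM, Sum.elim_inl, Sum.elim_inr, mul_neg] at this
    simp only [Finset.univ_unique, Finset.sum_singleton] at this
    have hAT : (Aᵀ.mulVec μ) k = ∑ j, -(y (Sum.inl j) * A j k) := by
      simp [Matrix.mulVec, dotProduct, Matrix.transpose_apply, hμdef, mul_comm]
    simp only [Pi.add_apply, Pi.smul_apply, smul_eq_mul, hAT]
    rw [← this]
  · intro i
    simp only [hδdef, Matrix.mulVec_smul, Pi.smul_apply, smul_eq_mul]
    exact mul_le_mul_of_nonneg_left (hvs i) (hy0 _)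
  · have hqy : q ⬝ᵥ y = b ⬝ᵥ μ + γ * zstar A b chat := by
      rw [dotProduct, Fintype.sum_sum_type]
      simp only [hq, Sum.elim_inl, Sum.elim_inr, Finset.univ_unique, Finset.sum_singleton]
      rw [dotProduct]
      simp only [hμdef, mul_neg, neg_mul, hγdef]
      ring_nf
    have hcδ : chat ⬝ᵥ δ = γ * zstar A b chat := by
      rw [hδdef, dotProduct_smul, smul_eq_mul, hvsz]
    rw [hcδ, ← hqy]
    exact hyval
end

noncomputable section
variable {m n N K : ℕ}

variable {A : Matrix (Fin m) (Fin n) ℝ} {b : Fin m → ℝ}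

lemma sum_split (c : Fin N → Fin n → ℝ) (v : Fin N → Fin n → ℝ) :
    (1 / (N : ℝ)) * ∑ i, c i ⬝ᵥ v i = ∑ i, ((1 / (N : ℝ)) • c i) ⬝ᵥ v i := by
  rw [Finset.mul_sum]
  exact Finset.sum_congr rfl (fun i _ => by
    rw [smul_dotProduct, smul_eq_mul])

lemma pessValue_eq_sum (hne : (polyV A b).Nonempty) (hbd : Bornology.IsBounded (polyV A b))
    (x : Fin N → Fin K → ℝ) (c : Fin N → Fin n → ℝ) (ω : Matrix (Fin n) (Fin K) ℝ) :
    pessValue A b x c ω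
      = ∑ i, Ssup A b (ω.mulVec (x i)) ((1 / (N : ℝ)) • c i) := by
  apply IsGreatest.csSup_eq
  constructor
  · -- the sum is in the set
    choose vs hvs hvseq using
      fun i => Ssup_attained hne hbd (ω.mulVec (x i)) ((1 / (N : ℝ)) • c i)
    refine ⟨vs, hvs, ?_⟩
    rw [sum_split]
    exact (Finset.sum_congr rfl (fun i _ => hvseq i)).symm
  · rintro r ⟨v, hv, rfl⟩
    rw [sum_split]
    exact Finset.sum_le_sum (fun i _ => le_Ssup hbd (hv i))
end


theorem stmt_5 (m n N K : ℕ)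
    (A : Matrix (Fin m) (Fin n) ℝ) (b : Fin m → ℝ)
    (hne : (polyV A b).Nonempty) (hbd : Bornology.IsBounded (polyV A b))
    (x : Fin N → Fin K → ℝ) (c : Fin N → Fin n → ℝ) :
    sInf (Set.range fun ω : Matrix (Fin n) (Fin K) ℝ => pessValue A b x c ω) =
    sInf {r : ℝ | ∃ (ω : Matrix (Fin n) (Fin K) ℝ) (μ : Fin N → Fin m → ℝ)
        (δ : Fin N → Fin n → ℝ) (γ : Fin N → ℝ),
        (∀ i, Aᵀ.mulVec (μ i) + γ i • ω.mulVec (x i) = (1 / (N : ℝ)) • c i ∧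
          γ i • b ≤ A.mulVec (δ i) ∧ μ i ≤ 0 ∧ 0 ≤ γ i) ∧
        r = ∑ i, (b ⬝ᵥ μ i + ω.mulVec (x i) ⬝ᵥ δ i)} := by
  classical
  set D := {r : ℝ | ∃ (ω : Matrix (Fin n) (Fin K) ℝ) (μ : Fin N → Fin m → ℝ)
        (δ : Fin N → Fin n → ℝ) (γ : Fin N → ℝ),
        (∀ i, Aᵀ.mulVec (μ i) + γ i • ω.mulVec (x i) = (1 / (N : ℝ)) • c i ∧
          γ i • b ≤ A.mulVec (δ i) ∧ μ i ≤ 0 ∧ 0 ≤ γ i) ∧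
        r = ∑ i, (b ⬝ᵥ μ i + ω.mulVec (x i) ⬝ᵥ δ i)} with hD
  set L : ℝ := ∑ i, zstar A b ((1 / (N : ℝ)) • c i) with hL
  -- lower bound on each Ssup
  have hSlb : ∀ (ω : Matrix (Fin n) (Fin K) ℝ) (i : Fin N),
      zstar A b ((1 / (N : ℝ)) • c i) ≤ Ssup A b (ω.mulVec (x i)) ((1 / (N : ℝ)) • c i) := by
    intro ω i
    obtain ⟨v, hv, hveq⟩ := Ssup_attained hne hbd (ω.mulVec (x i)) ((1 / (N : ℝ)) • c i)
    rw [← hveq]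
    exact zstar_le hbd hv.1
  have hpesslb : ∀ ω : Matrix (Fin n) (Fin K) ℝ, L ≤ pessValue A b x c ω := by
    intro ω
    rw [pessValue_eq_sum hne hbd]
    exact Finset.sum_le_sum (fun i _ => hSlb ω i)
  -- weak duality: for any dual feasible point, pessValue ω ≤ r
  have hweak : ∀ r ∈ D, ∃ ω : Matrix (Fin n) (Fin K) ℝ, pessValue A b x c ω ≤ r := by
    rintro r ⟨ω, μ, δ, γ, hfeas, rfl⟩
    refine ⟨ω, ?_⟩
    rw [pessValue_eq_sum hne hbd]
    refine Finset.sum_le_sum (fun i _ => ?_)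
    obtain ⟨h1, h2, h3, h4⟩ := hfeas i
    exact weak_dual_single hne hbd h1 h2 h3 h4
  -- strong duality: for each ω there is a dual feasible point with value ≤ pessValue ω
  have hstrong : ∀ ω : Matrix (Fin n) (Fin K) ℝ,
      ∃ r ∈ D, r ≤ pessValue A b x c ω := by
    intro ω
    choose μ δ γ h1 h2 h3 h4 h5 using
      fun i => strong_dual_single hne hbd (ω.mulVec (x i)) ((1 / (N : ℝ)) • c i)
    refine ⟨∑ i, (b ⬝ᵥ μ i + ω.mulVec (x i) ⬝ᵥ δ i),
      ⟨ω, μ, δ, γ, fun i => ⟨h1 i, h2 i, h3 i, h4 i⟩, rfl⟩, ?_⟩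
    rw [pessValue_eq_sum hne hbd]
    exact Finset.sum_le_sum (fun i _ => h5 i)
  -- nonemptiness and lower bounds
  have hDne : D.Nonempty := by
    obtain ⟨r, hr, _⟩ := hstrong 0
    exact ⟨r, hr⟩
  have hDlb : ∀ r ∈ D, L ≤ r := by
    intro r hr
    obtain ⟨ω, hω⟩ := hweak r hr
    exact le_trans (hpesslb ω) hω
  have hRne : (Set.range fun ω : Matrix (Fin n) (Fin K) ℝ =>
      pessValue A b x c ω).Nonempty := ⟨pessValue A b x c 0, 0, rfl⟩
  have hRlb : ∀ r ∈ (Set.range fun ω : Matrix (Fin n) (Fin K) ℝ =>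
      pessValue A b x c ω), L ≤ r := by
    rintro r ⟨ω, rfl⟩
    exact hpesslb ω
  apply le_antisymm
  · refine le_csInf hDne (fun r hr => ?_)
    obtain ⟨ω, hω⟩ := hweak r hr
    exact le_trans (csInf_le ⟨L, hRlb⟩ ⟨ω, rfl⟩) hω
  · refine le_csInf hRne ?_
    rintro _ ⟨ω, rfl⟩
    obtain ⟨r, hrD, hrle⟩ := hstrong ω
    exact le_trans (csInf_le ⟨L, hDlb⟩ hrD) hrle
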